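/- Let n ≥ 1 and let (x_i, y_i) ∈ ℝ², i ∈ Fin n, be a training set. Define the Mixup objective for affine models M(a,b) = Σ_{i,j ∈ Fin n} ∫₀¹ (λ·y_i + (1−λ)·y_j − (a·(λ·x_i + (1−λ)·x_j) + b))² dλ and the vanilla least-squares objective V(a,b) = Σ_{i ∈ Fin n} (y_i − (a·x_i + b))². Then a pair (a,b) ∈ ℝ² is a global minimizer of M if and only if it is a global minimizer of V; in particular, for affine (linear) models the Mixup criterion and the vanilla criterion have the same optimal models. -/

import Mathlib

/-- The Mixup objective for the affine model `f(x) = a·x + b`: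
`M(a,b) = Σ_{i,j} ∫₀¹ (λ·y_i + (1−λ)·y_j − (a·(λ·x_i + (1−λ)·x_j) + b))² dλ`. -/
noncomputable def mixupObjective (n : ℕ) (x y : Fin n → ℝ) (a b : ℝ) : ℝ :=
  ∑ i, ∑ j,
    ∫ l in (0 : ℝ)..1,
      (l * y i + (1 - l) * y j - (a * (l * x i + (1 - l) * x j) + b)) ^ 2

/-- The vanilla least-squares objective `V(a,b) = Σ_i (y_i − (a·x_i + b))²`. -/
noncomputable def vanillaObjective (n : ℕ) (x y : Fin n → ℝ) (a b : ℝ) : ℝ :=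
  ∑ i, (y i - (a * x i + b)) ^ 2

lemma integral_mix (p q : ℝ) :
    (∫ l in (0:ℝ)..1, (l * p + (1 - l) * q) ^ 2) = (p^2 + p*q + q^2)/3 := by
  have h : (fun l : ℝ => (l * p + (1 - l) * q) ^ 2)
      = fun l : ℝ => (p - q)^2 * l^2 + (2*q*(p-q)) * l + q^2 := by
    funext l; ring
  rw [show (∫ l in (0:ℝ)..1, (l * p + (1 - l) * q) ^ 2)
      = ∫ l in (0:ℝ)..1, ((p - q)^2 * l^2 + (2*q*(p-q)) * l + q^2) from by rw [h]]
  rw [intervalIntegral.integral_add, intervalIntegral.integral_add,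
    intervalIntegral.integral_const_mul, intervalIntegral.integral_const_mul,
    integral_pow, integral_id, intervalIntegral.integral_const]
  · simp only [smul_eq_mul]; ring
  all_goals apply Continuous.intervalIntegrable; fun_prop

lemma mixup_repr (n : ℕ) (x y : Fin n → ℝ) (a b : ℝ) :
    mixupObjective n x y a b =
      (2 * n * vanillaObjective n x y a b
        + (∑ i, (y i - (a * x i + b))) ^ 2) / 3 := by
  set u : Fin n → ℝ := fun i => y i - (a * x i + b) with hu
  have h1 : ∀ i j : Fin n,
      (∫ l in (0:ℝ)..1,
          (l * y i + (1 - l) * y j - (a * (l * x i + (1 - l) * x j) + b)) ^ 2)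
        = (u i ^ 2 + u i * u j + u j ^ 2) / 3 := by
    intro i j
    rw [← integral_mix (u i) (u j)]
    congr 1; funext l; simp only [hu]; ring
  unfold mixupObjective vanillaObjective
  simp_rw [h1]
  have e1 : ∑ _i : Fin n, ∑ _j : Fin n, (1:ℝ) = n * n := by simp
  have e2 : ∑ i : Fin n, ∑ j : Fin n, u i * u j = (∑ i, u i) * (∑ j, u j) := by
    rw [Finset.sum_mul_sum]
  have e3 : ∀ i : Fin n, ∑ _j : Fin n, u i ^ 2 = n * u i ^ 2 := by
    intro i; rw [Finset.sum_const, Finset.card_fin]; simp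
  have e4 : ∑ _i : Fin n, ∑ j : Fin n, u j ^ 2 = n * ∑ j, u j ^ 2 := by
    rw [Finset.sum_const, Finset.card_fin]; simp
  calc ∑ i : Fin n, ∑ j : Fin n, (u i ^ 2 + u i * u j + u j ^ 2) / 3
      = ((∑ i : Fin n, ∑ _j : Fin n, u i ^ 2)
        + (∑ i : Fin n, ∑ j : Fin n, u i * u j)
        + (∑ _i : Fin n, ∑ j : Fin n, u j ^ 2)) / 3 := by
        simp_rw [add_div, Finset.sum_add_distrib, ← Finset.sum_div]
    _ = (2 * n * ∑ i, u i ^ 2 + (∑ i, u i) ^ 2) / 3 := by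
        simp_rw [e3]
        rw [e2, e4, ← Finset.mul_sum]
        ring

lemma center (n : ℕ) (hn : (n:ℝ) ≠ 0) (u : Fin n → ℝ) :
    (∑ i, (u i - (∑ j, u j)/n)) = 0 ∧
    (∑ i, (u i - (∑ j, u j)/n)^2) = (∑ i, u i ^ 2) - (∑ i, u i)^2 / n := by
  constructor
  · rw [Finset.sum_sub_distrib, Finset.sum_const, Finset.card_fin]
    rw [nsmul_eq_mul, mul_div_cancel₀ _ hn, sub_self]
  · have h : ∀ i, (u i - (∑ j, u j)/n)^2
        = u i^2 - (2*(∑ j, u j)/n)*u i + ((∑ j, u j)/n)^2 := fun i => by ring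
    simp_rw [h]
    rw [Finset.sum_add_distrib, Finset.sum_sub_distrib, ← Finset.mul_sum,
      Finset.sum_const, Finset.card_fin]
    field_simp
    have hnn : (n:ℝ)^2 * ((n:ℝ)⁻¹)^2 = 1 := by rw [← mul_pow, mul_inv_cancel₀ hn, one_pow]
    linear_combination (∑ j, u j)^2 * hnn

/-- For affine models in dimension one, a pair `(a,b)` is a global minimizer
of the Mixup objective if and only if it is a global minimizer of the vanilla least-squares
objective. -/
theorem mixup_vanilla_same_affine_minimizers (n : ℕ) (hn : 1 ≤ n) (x y : Fin n → ℝ)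
    (a b : ℝ) :
    (∀ a' b' : ℝ, mixupObjective n x y a b ≤ mixupObjective n x y a' b') ↔
      (∀ a' b' : ℝ, vanillaObjective n x y a b ≤ vanillaObjective n x y a' b') := by
  have hnpos : (0:ℝ) < n := by exact_mod_cast Nat.lt_of_lt_of_le Nat.zero_lt_one hn
  have hn0 : (n:ℝ) ≠ 0 := ne_of_gt hnpos
  set S : ℝ → ℝ → ℝ := fun a' b' => ∑ i, (y i - (a' * x i + b')) with hSdef
  set V : ℝ → ℝ → ℝ := fun a' b' => vanillaObjective n x y a' b' with hVdef
  have hM : ∀ a' b', mixupObjective n x y a' b' = (2*n*(V a' b') + (S a' b')^2)/3 :=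
    fun a' b' => mixup_repr n x y a' b'
  have hshift : ∀ a' b', S a' (b' + S a' b' / n) = 0 ∧
      V a' (b' + S a' b' / n) = V a' b' - (S a' b')^2 / n := by
    intro a' b'
    have hc := center n hn0 (fun i => y i - (a' * x i + b'))
    have h1 : ∀ i : Fin n, y i - (a' * x i + (b' + S a' b' / n))
        = (y i - (a' * x i + b')) - (∑ j, (y j - (a' * x j + b')))/(n:ℝ) := by
      intro i; simp only [hSdef]; ring
    constructor
    · simp only [hSdef]
      refine (Finset.sum_congr rfl (fun i _ => h1 i)).trans ?_
      exact hc.1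
    · simp only [hVdef]
      unfold vanillaObjective
      simp_rw [h1]
      rw [hc.2]
  constructor
  · intro hmin a' b'
    have hS0 : S a b = 0 := by
      have h := hmin a (b + S a b / n)
      rw [hM, hM, (hshift a b).1, (hshift a b).2] at h
      have : (S a b)^2 ≤ 0 := by
        have h2 : (S a b)^2 / n * n = (S a b)^2 := div_mul_cancel₀ _ hn0
        nlinarith [sq_nonneg (S a b)]
      nlinarith [sq_nonneg (S a b)]
    have h := hmin a' (b' + S a' b' / n)
    rw [hM, hM, (hshift a' b').1, (hshift a' b').2, hS0] at h
    have h2 : (S a' b')^2 / n * n = (S a' b')^2 := div_mul_cancel₀ _ hn0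
    nlinarith [sq_nonneg (S a' b')]
  · intro hmin a' b'
    have hS0 : S a b = 0 := by
      have h : V a b ≤ V a (b + S a b / n) := hmin a (b + S a b / n)
      rw [(hshift a b).2] at h
      have h2 : (S a b)^2 / n * n = (S a b)^2 := div_mul_cancel₀ _ hn0
      have : (S a b)^2 = 0 := by nlinarith [sq_nonneg (S a b)]
      exact pow_eq_zero_iff (by norm_num) |>.mp this
    rw [hM, hM, hS0]
    have hv : V a b ≤ V a' b' := hmin a' b'
    nlinarith [sq_nonneg (S a' b')]
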